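/- If the incoming flow is strictly feasible, i.e., f_i(f̄_0, r̄) < F_i^d for all i, then the set of equilibrium density vectors consists of the single vector n^u with components n_i^u = f̄_i/(β_i^f v_i). -/

import Mathlib

/-- Data of the freeway Cell Transmission Model with `K` mainline links
(indices `1,…,K`), an entrance link `0` and an exit link `K+1`. -/
structure Freeway where
  K : ℕ
  /-- free-flow speeds -/
  v : ℕ → ℝ
  /-- congestion wave speeds -/
  w : ℕ → ℝ
  /-- maximal numbers of vehicles -/
  Nmax : ℕ → ℝ
  /-- link capacities -/
  Fcap : ℕ → ℝ
  /-- outflow capacities `F_i^d` -/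
  Fd : ℕ → ℝ
  /-- entrance capacity `F_0` -/
  F0 : ℝ
  /-- on-ramp capacities `R_i` -/
  R : ℕ → ℝ
  /-- mainline split ratios `β_i^f` -/
  betaf : ℕ → ℝ
  /-- mainline priority `p_{i-1}^f` at node `i` -/
  pF : ℕ → ℝ
  /-- on-ramp priority `p_i^r` at node `i` -/
  pR : ℕ → ℝ
  /-- entrance demand flow `f_{-1}` -/
  fin : ℝ
  /-- on-ramp demands `d_i` -/
  d : ℕ → ℝ
  hv : ∀ i, 0 < v i
  hw : ∀ i, 0 < w i
  hbeta : ∀ i, 0 < betaf i ∧ betaf i ≤ 1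
  hp : ∀ i, 0 ≤ pF i ∧ 0 ≤ pR i ∧ pF i + pR i = 1
  hd : ∀ i, 0 ≤ d i
  hR : ∀ i, 0 ≤ R i
  hfin : 0 ≤ fin
  hF0 : 0 ≤ F0
  hFd : ∀ i, 0 < Fd i ∧ Fd i ≤ betaf i * Fcap i
  /-- the free-flow no-constraint condition `F/v + F/w ≤ N` -/
  hN : ∀ i, Fcap i / v i + Fcap i / w i ≤ Nmax i

/-- The merge node model (Tampère et al.) for one mainline input and one
on-ramp input: demands `fd, rd`, supply `fs`, priorities `pf, pr`. -/
noncomputable def mergeFlow (fd rd fs pf pr : ℝ) : ℝ × ℝ :=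
  if fd + rd ≤ fs then (fd, rd)
  else if fd ≤ pf * fs then (fd, fs - fd)
  else if rd ≤ pr * fs then (fs - rd, rd)
  else (pf * fs, pr * fs)

/-- Outflow demand of mainline link `i` with occupancy `n i`. -/
noncomputable def fdem (fw : Freeway) (n : ℕ → ℝ) (i : ℕ) : ℝ :=
  min (fw.betaf i * fw.v i * n i) (fw.Fd i)

/-- Inflow supply of mainline link `i` with occupancy `n i`. -/
noncomputable def fsup (fw : Freeway) (n : ℕ → ℝ) (i : ℕ) : ℝ :=
  min (fw.w i * (fw.Nmax i - n i)) (fw.Fcap i)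

/-- `(n, f, r)` is an equilibrium of the freeway model: there are a constant
entrance demand `fdem0` and constant ramp demands `rdem` (coming from fixed or
steadily growing queues) such that all node flows reproduce themselves, the
densities are constant (`f i = β_i^f (f (i-1) + r i)`) and the exit link is
uncongested. -/
def IsEquilibrium (fw : Freeway) (n f r : ℕ → ℝ) : Prop :=
  ∃ fdem0 : ℝ, ∃ rdem : ℕ → ℝ,
    -- entrance: queue constant (`f 0 = fin`) or growing (demand saturated)
    ((f 0 = fw.fin ∨ fdem0 = fw.F0) ∧ f 0 ≤ fdem0 ∧ fdem0 ≤ fw.F0 ∧ f 0 ≤ fw.fin) ∧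
    -- on-ramps: queue constant (`r i = d i`) or growing (demand saturated)
    (∀ i, 1 ≤ i → i ≤ fw.K →
      (r i = fw.d i ∨ rdem i = fw.R i) ∧ r i ≤ rdem i ∧ rdem i ≤ fw.R i ∧ r i ≤ fw.d i) ∧
    -- no on-ramp at the last node
    rdem (fw.K + 1) = 0 ∧
    -- density bounds
    (∀ i, 1 ≤ i → i ≤ fw.K + 1 → 0 ≤ n i ∧ n i ≤ fw.Nmax i) ∧
    -- node flows given by the merge node model
    (∀ i, 1 ≤ i → i ≤ fw.K + 1 →
      (f (i - 1), r i) =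
        mergeFlow (if i = 1 then fdem0 else fdem fw n (i - 1)) (rdem i)
          (fsup fw n i) (fw.pF i) (fw.pR i)) ∧
    -- constant densities: conservation at every link
    (∀ i, 1 ≤ i → i ≤ fw.K + 1 → f i = fw.betaf i * (f (i - 1) + r i)) ∧
    -- the exit link is uncongested and discharges its demand
    fw.v (fw.K + 1) * n (fw.K + 1) ≤ fw.Fcap (fw.K + 1) ∧
    f (fw.K + 1) = fdem fw n (fw.K + 1)

/-- Maximum on-ramp flows `r̄_i = min{d_i, R_i}` (and `0` outside `1,…,K`). -/
noncomputable def rbar (fw : Freeway) (i : ℕ) : ℝ :=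
  if 1 ≤ i ∧ i ≤ fw.K then min (fw.d i) (fw.R i) else 0

/-- Maximum flows `f̄`: `f̄_0 = min{f_{-1}, F_0}`,
`f̄_i = min{β_i^f (f̄_{i-1} + r̄_i), F_i^d}`. -/
noncomputable def fbar (fw : Freeway) : ℕ → ℝ
  | 0 => min fw.fin fw.F0
  | i + 1 => min (fw.betaf (i + 1) * (fbar fw i + rbar fw (i + 1))) (fw.Fd (i + 1))

/-- The uncapacitated flows `f_i(f̄_0, r̄)` obtained by propagating the maximal
entrance flows through the split ratios with no capacity constraints. -/
noncomputable def flin (fw : Freeway) : ℕ → ℝ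
  | 0 => min fw.fin fw.F0
  | i + 1 => fw.betaf (i + 1) * (flin fw i + rbar fw (i + 1))

section Aux

lemma Fcap_pos (fw : Freeway) (i : ℕ) : 0 < fw.Fcap i := by
  have hb := fw.hbeta i; have hf := fw.hFd i
  nlinarith [hb.1, hb.2, hf.1, hf.2]

lemma rbar_nonneg (fw : Freeway) (i : ℕ) : 0 ≤ rbar fw i := by
  rw [rbar]; split_ifs
  · exact le_min (fw.hd i) (fw.hR i)
  · exact le_rfl

lemma flin_nonneg (fw : Freeway) : ∀ i, 0 ≤ flin fw i
  | 0 => le_min fw.hfin fw.hF0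
  | i + 1 => mul_nonneg (fw.hbeta (i + 1)).1.le
      (add_nonneg (flin_nonneg fw i) (rbar_nonneg fw (i + 1)))

lemma merge_eq_of_sum_lt (fd rd fs pf pr : ℝ) (hp : pf + pr = 1)
    (h : (mergeFlow fd rd fs pf pr).1 + (mergeFlow fd rd fs pf pr).2 < fs) :
    mergeFlow fd rd fs pf pr = (fd, rd) := by
  unfold mergeFlow at h ⊢
  split_ifs at h ⊢ with h1 h2 h3
  · rfl
  · simp only at h; linarith
  · simp only at h; linarith
  · simp only at h
    have : pf * fs + pr * fs = fs := by rw [← add_mul, hp, one_mul]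
    linarith

lemma merge_snd_nonpos (fd fs pf pr : ℝ) (hfs : 0 ≤ fs) (hpr : 0 ≤ pr) :
    (mergeFlow fd 0 fs pf pr).2 ≤ 0 := by
  unfold mergeFlow
  split_ifs with h1 h2 h3
  · exact le_rfl
  · simp only; linarith
  · exact le_rfl
  · exact absurd (mul_nonneg hpr hfs) h3

lemma vx_lt_Fcap (fw : Freeway) (i : ℕ) (x s : ℝ)
    (hx : fw.betaf i * fw.v i * x = s) (hs : s < fw.Fd i) :
    fw.v i * x < fw.Fcap i := by
  have hb := (fw.hbeta i).1
  have hf := (fw.hFd i).2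
  nlinarith

lemma le_Nmax (fw : Freeway) (i : ℕ) (x s : ℝ)
    (hx : fw.betaf i * fw.v i * x = s) (hs : s < fw.Fd i) : x ≤ fw.Nmax i := by
  have hv := fw.hv i
  have hw := fw.hw i
  have hN := fw.hN i
  have hFc := Fcap_pos fw i
  have h1 := vx_lt_Fcap fw i x s hx hs
  have hx2 : x < fw.Fcap i / fw.v i := by rw [lt_div_iff₀ hv, mul_comm]; exact h1
  have hw2 : 0 < fw.Fcap i / fw.w i := div_pos hFc hw
  linarith

lemma sum_lt_supply (fw : Freeway) (i : ℕ) (x s : ℝ)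
    (hx : fw.betaf i * fw.v i * x = s) (hs : s < fw.Fd i) :
    s / fw.betaf i < min (fw.w i * (fw.Nmax i - x)) (fw.Fcap i) := by
  have hb := (fw.hbeta i).1
  have hv := fw.hv i
  have hw := fw.hw i
  have hN := fw.hN i
  have hFd := fw.hFd i
  have hFc := Fcap_pos fw i
  have h1 : s / fw.betaf i < fw.Fcap i := by
    rw [div_lt_iff₀ hb]; nlinarith [hFd.2]
  refine lt_min ?_ h1
  have hvx := vx_lt_Fcap fw i x s hx hs
  have hx2 : x < fw.Fcap i / fw.v i := by rw [lt_div_iff₀ hv, mul_comm]; exact hvx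
  have h3 : fw.Fcap i / fw.w i < fw.Nmax i - x := by linarith
  have h2 : fw.Fcap i < fw.w i * (fw.Nmax i - x) := by
    calc fw.Fcap i = fw.w i * (fw.Fcap i / fw.w i) := by field_simp
    _ < fw.w i * (fw.Nmax i - x) := mul_lt_mul_of_pos_left h3 hw
  linarith

end Aux

/-- If the incoming flow is strictly feasible, i.e. `f_i(f̄_0, r̄) < F_i^d`
for all `i = 1,…,K+1`, then the set of equilibrium density vectors consists
of the single uncongested vector `n^u`, `n_i^u = f̄_i / (β_i^f v_i)`:
every equilibrium has these densities, and such an equilibrium exists. -/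
theorem strictly_feasible_unique_equilibrium_densities
    (fw : Freeway)
    (hfeas : ∀ i, 1 ≤ i → i ≤ fw.K + 1 → flin fw i < fw.Fd i) :
    (∀ n f r, IsEquilibrium fw n f r →
      ∀ i, 1 ≤ i → i ≤ fw.K + 1 → n i = flin fw i / (fw.betaf i * fw.v i)) ∧
    (∃ n f r, IsEquilibrium fw n f r ∧
      ∀ i, 1 ≤ i → i ≤ fw.K + 1 → n i = flin fw i / (fw.betaf i * fw.v i)) := by
  constructor
  · rintro n f r ⟨fdem0, rdem, ⟨hent1, hent2, hent3, hent4⟩, hramp, hrK, hbnd, hnode,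
      hcons, hexit1, hexit2⟩
    -- Step A: upper bound on ramp flows
    have hrle : ∀ i, 1 ≤ i → i ≤ fw.K + 1 → r i ≤ rbar fw i := by
      intro i hi1 hi2
      rcases Nat.lt_or_ge i (fw.K + 1) with h | h
      · have hK : i ≤ fw.K := by omega
        obtain ⟨h1, h2, h3, h4⟩ := hramp i hi1 hK
        rw [rbar, if_pos ⟨hi1, hK⟩]
        exact le_min h4 (h2.trans h3)
      · have hiK : i = fw.K + 1 := by omega
        subst hiK
        rw [rbar, if_neg (by omega)]
        have hm := hnode (fw.K + 1) (by omega) le_rfl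
        have hfs : 0 ≤ fsup fw n (fw.K + 1) := by
          have hb := hbnd (fw.K + 1) (by omega) le_rfl
          have hw := fw.hw (fw.K + 1)
          exact le_min (by nlinarith [hb.2]) (Fcap_pos fw _).le
        have hr2 := congrArg Prod.snd hm
        simp only at hr2
        rw [hr2, hrK]
        exact merge_snd_nonpos _ _ _ _ hfs (fw.hp (fw.K + 1)).2.1
    -- Step A': upper bound on flows
    have hub : ∀ i, i ≤ fw.K + 1 → f i ≤ flin fw i := by
      intro i
      induction i with
      | zero => exact fun _ => le_min hent4 (hent2.trans hent3)
      | succ j ih =>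
        intro hj
        have h1 := hcons (j + 1) (by omega) hj
        simp only [Nat.add_sub_cancel] at h1
        have h2 : f j ≤ flin fw j := ih (by omega)
        have h3 : r (j + 1) ≤ rbar fw (j + 1) := hrle (j + 1) (by omega) hj
        rw [h1]
        show _ ≤ fw.betaf (j + 1) * (flin fw j + rbar fw (j + 1))
        have hb := (fw.hbeta (j + 1)).1
        nlinarith
    -- Step B: key node argument
    have hkey : ∀ i, 1 ≤ i → i ≤ fw.K + 1 → fw.betaf i * fw.v i * n i = f i →
        f (i - 1) = (if i = 1 then fdem0 else fdem fw n (i - 1)) ∧ r i = rdem i := by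
      intro i hi1 hi2 hden
      have hflt : f i < fw.Fd i := lt_of_le_of_lt (hub i hi2) (hfeas i hi1 hi2)
      have hsum := hcons i hi1 hi2
      have hb := (fw.hbeta i).1
      have hsup := sum_lt_supply fw i (n i) (f i) hden hflt
      have hsum2 : f (i - 1) + r i = f i / fw.betaf i := by
        rw [hsum]; field_simp
      have hlt : f (i - 1) + r i < fsup fw n i := by
        rw [hsum2]; exact hsup
      have hm := hnode i hi1 hi2
      have hme : mergeFlow (if i = 1 then fdem0 else fdem fw n (i - 1)) (rdem i)
          (fsup fw n i) (fw.pF i) (fw.pR i)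
          = ((if i = 1 then fdem0 else fdem fw n (i - 1)), rdem i) := by
        apply merge_eq_of_sum_lt _ _ _ _ _ (fw.hp i).2.2
        rw [← hm]; exact hlt
      rw [hme] at hm
      exact ⟨congrArg Prod.fst hm, congrArg Prod.snd hm⟩
    -- Step B': downward induction for density relation
    have hden : ∀ m i, 1 ≤ i → i + m = fw.K + 1 → fw.betaf i * fw.v i * n i = f i := by
      intro m
      induction m with
      | zero =>
        intro i hi1 hieq
        have hieq' : i = fw.K + 1 := by omega
        subst hieq'
        have hflt : f (fw.K + 1) < fw.Fd (fw.K + 1) :=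
          lt_of_le_of_lt (hub _ le_rfl) (hfeas _ (by omega) le_rfl)
        rw [hexit2, fdem]
        rw [hexit2, fdem] at hflt
        rcases min_cases (fw.betaf (fw.K + 1) * fw.v (fw.K + 1) * n (fw.K + 1))
          (fw.Fd (fw.K + 1)) with h | h
        · exact h.1.symm
        · rw [h.1] at hflt; exact absurd hflt (lt_irrefl _)
      | succ m ih =>
        intro i hi1 hieq
        have hQ := (hkey (i + 1) (by omega) (by omega) (ih (i + 1) (by omega) (by omega))).1
        simp only [Nat.add_sub_cancel] at hQ
        rw [if_neg (by omega), fdem] at hQ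
        have hflt : f i < fw.Fd i :=
          lt_of_le_of_lt (hub i (by omega)) (hfeas i hi1 (by omega))
        rcases min_cases (fw.betaf i * fw.v i * n i) (fw.Fd i) with h | h
        · rw [hQ, h.1]
        · rw [hQ, h.1] at hflt; exact absurd hflt (lt_irrefl _)
    have hdall : ∀ i, 1 ≤ i → i ≤ fw.K + 1 → fw.betaf i * fw.v i * n i = f i :=
      fun i h1 h2 => hden (fw.K + 1 - i) i h1 (by omega)
    have hkall : ∀ i, 1 ≤ i → i ≤ fw.K + 1 →
        f (i - 1) = (if i = 1 then fdem0 else fdem fw n (i - 1)) ∧ r i = rdem i :=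
      fun i h1 h2 => hkey i h1 h2 (hdall i h1 h2)
    -- Step C: flows equal the max flows
    have hf0 : f 0 = min fw.fin fw.F0 := by
      have h := (hkall 1 le_rfl (by omega)).1
      rw [if_pos rfl] at h
      rcases hent1 with h1 | h1
      · have : fw.fin ≤ fw.F0 := by rw [← h1]; exact hent2.trans hent3
        rw [h1, min_eq_left this]
      · have hF : f 0 = fw.F0 := by rw [h, h1]
        have : fw.F0 ≤ fw.fin := hF ▸ hent4
        rw [hF, min_eq_right this]
    have hrall : ∀ i, 1 ≤ i → i ≤ fw.K + 1 → r i = rbar fw i := by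
      intro i h1 h2
      rcases Nat.lt_or_ge i (fw.K + 1) with h | h
      · have hK : i ≤ fw.K := by omega
        obtain ⟨ha, hb2, hc, hd2⟩ := hramp i h1 hK
        have hr := (hkall i h1 h2).2
        rw [rbar, if_pos ⟨h1, hK⟩]
        rcases ha with ha | ha
        · exact le_antisymm (le_min hd2 (hr.le.trans hc)) (by rw [ha]; exact min_le_left _ _)
        · have hrR : r i = fw.R i := hr.trans ha
          exact le_antisymm (le_min hd2 hrR.le) (by rw [hrR]; exact min_le_right _ _)
      · have hiK : i = fw.K + 1 := by omega
        subst hiK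
        rw [rbar, if_neg (by omega)]
        exact (hkall _ h1 h2).2.trans hrK
    have hfall : ∀ i, i ≤ fw.K + 1 → f i = flin fw i := by
      intro i
      induction i with
      | zero => exact fun _ => hf0
      | succ j ih =>
        intro hj
        have h1 := hcons (j + 1) (by omega) hj
        simp only [Nat.add_sub_cancel] at h1
        rw [h1, ih (by omega), hrall (j + 1) (by omega) hj]
        rfl
    intro i h1 h2
    have hd := hdall i h1 h2
    rw [hfall i h2] at hd
    have hbv : fw.betaf i * fw.v i ≠ 0 :=
      ne_of_gt (mul_pos (fw.hbeta i).1 (fw.hv i))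
    rw [eq_div_iff hbv, mul_comm]
    exact hd
  -- Existence
  · refine ⟨fun i => flin fw i / (fw.betaf i * fw.v i), flin fw, rbar fw,
      ⟨min fw.fin fw.F0, rbar fw, ?_, ?_, ?_, ?_, ?_, ?_, ?_, ?_⟩, fun i _ _ => rfl⟩
    · refine ⟨?_, le_rfl, min_le_right _ _, min_le_left _ _⟩
      rcases le_total fw.fin fw.F0 with h | h
      · exact Or.inl (min_eq_left h)
      · exact Or.inr (min_eq_right h)
    · intro i h1 h2
      rw [rbar, if_pos ⟨h1, h2⟩]
      refine ⟨?_, le_rfl, min_le_right _ _, min_le_left _ _⟩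
      rcases le_total (fw.d i) (fw.R i) with h | h
      · exact Or.inl (min_eq_left h)
      · exact Or.inr (min_eq_right h)
    · rw [rbar, if_neg (by omega)]
    · intro i h1 h2
      have hbv : fw.betaf i * fw.v i ≠ 0 :=
        ne_of_gt (mul_pos (fw.hbeta i).1 (fw.hv i))
      have hxi : fw.betaf i * fw.v i * (flin fw i / (fw.betaf i * fw.v i)) = flin fw i := by
        field_simp
        exact mul_div_cancel_left₀ _ hbv
      constructor
      · exact div_nonneg (flin_nonneg fw i) (mul_pos (fw.hbeta i).1 (fw.hv i)).le
      · exact le_Nmax fw i _ _ hxi (hfeas i h1 h2)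
    · intro i h1 h2
      have hbv : fw.betaf i * fw.v i ≠ 0 :=
        ne_of_gt (mul_pos (fw.hbeta i).1 (fw.hv i))
      have hxi : fw.betaf i * fw.v i * (flin fw i / (fw.betaf i * fw.v i)) = flin fw i := by
        field_simp
        exact mul_div_cancel_left₀ _ hbv
      have hsup := sum_lt_supply fw i _ _ hxi (hfeas i h1 h2)
      obtain ⟨j, rfl⟩ : ∃ j, i = j + 1 := ⟨i - 1, by omega⟩
      have hdec : flin fw (j + 1) = fw.betaf (j + 1) * (flin fw j + rbar fw (j + 1)) := rfl
      have hb := (fw.hbeta (j + 1)).1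
      have hsum : flin fw j + rbar fw (j + 1) = flin fw (j + 1) / fw.betaf (j + 1) := by
        rw [hdec]; field_simp
      have hdem : (if j + 1 = 1 then min fw.fin fw.F0
          else fdem fw (fun i => flin fw i / (fw.betaf i * fw.v i)) (j + 1 - 1))
          = flin fw j := by
        split_ifs with hj
        · have : j = 0 := by omega
          subst this; rfl
        · simp only [Nat.add_sub_cancel, fdem]
          have hbv' : fw.betaf j * fw.v j ≠ 0 :=
            ne_of_gt (mul_pos (fw.hbeta j).1 (fw.hv j))
          have : fw.betaf j * fw.v j * (flin fw j / (fw.betaf j * fw.v j)) = flin fw j := by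
            field_simp
            exact mul_div_cancel_left₀ _ hbv'
          rw [this]
          exact min_eq_left (hfeas j (by omega) (by omega)).le
      simp only [Nat.add_sub_cancel] at hdem ⊢
      rw [hdem, mergeFlow, if_pos ?_]
      · have hlt : flin fw j + rbar fw (j + 1) < fsup fw
            (fun i => flin fw i / (fw.betaf i * fw.v i)) (j + 1) := by
          rw [hsum]; exact hsup
        exact hlt.le
    · intro i h1 h2
      obtain ⟨j, rfl⟩ : ∃ j, i = j + 1 := ⟨i - 1, by omega⟩
      simp only [Nat.add_sub_cancel]
      rfl
    · have hbv : fw.betaf (fw.K + 1) * fw.v (fw.K + 1) ≠ 0 :=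
        ne_of_gt (mul_pos (fw.hbeta (fw.K + 1)).1 (fw.hv (fw.K + 1)))
      have hb := (fw.hbeta (fw.K + 1)).1
      have hv := fw.hv (fw.K + 1)
      have hFd := (fw.hFd (fw.K + 1)).2
      have hfe := hfeas (fw.K + 1) (by omega) le_rfl
      have heq : fw.v (fw.K + 1) * (flin fw (fw.K + 1) / (fw.betaf (fw.K + 1) * fw.v (fw.K + 1)))
          = flin fw (fw.K + 1) / fw.betaf (fw.K + 1) := by
        field_simp
      rw [heq, div_le_iff₀ hb]
      nlinarith
    · show flin fw (fw.K + 1) = fdem fw _ (fw.K + 1)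
      rw [fdem]
      have hbv : fw.betaf (fw.K + 1) * fw.v (fw.K + 1) ≠ 0 :=
        ne_of_gt (mul_pos (fw.hbeta (fw.K + 1)).1 (fw.hv (fw.K + 1)))
      have : fw.betaf (fw.K + 1) * fw.v (fw.K + 1) *
          (flin fw (fw.K + 1) / (fw.betaf (fw.K + 1) * fw.v (fw.K + 1)))
          = flin fw (fw.K + 1) := by field_simp; exact mul_div_cancel_left₀ _ hbv
      rw [this]
      exact (min_eq_left (hfeas (fw.K + 1) (by omega) le_rfl).le).symm
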